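/- Let H be a Hermitian operator on a finite-dimensional Hilbert space with H|ψ⟩ having norm ‖H|ψ⟩‖ ≤ M for a unit vector |ψ⟩, and suppose ⟨ψ|H|ψ⟩ ≥ Δ > 0 with Δ/2 < ⟨ψ|H|ψ⟩. Let Π_{>Δ/2} denote the spectral projection of H onto eigenvalues strictly greater than Δ/2. Then ‖Π_{>Δ/2}|ψ⟩‖ ≥ (⟨ψ|H|ψ⟩ − Δ/2)/M ≥ Δ/(2M). -/
import Mathlib


open scoped ComplexInnerProductSpace

/-- Spectral-weight estimate: a unit state with mean energy `≥ Δ` and bounded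
energy second moment has weight at least `Δ/(2M)` above energy `Δ/2`.
`Pr` is the spectral projection of `H` onto eigenvalues strictly greater than `Δ/2`,
characterized by: it is an orthogonal projection commuting with `H`, `H > Δ/2` on
its range and `H ≤ Δ/2` on its kernel. -/
theorem spectral_weight_above_half_gap
    {E : Type*} [NormedAddCommGroup E] [InnerProductSpace ℂ E] [FiniteDimensional ℂ E]
    (H : E →L[ℂ] E) (hH : IsSelfAdjoint H)
    (ψ : E) (hψ : ‖ψ‖ = 1)
    (M Δ : ℝ) (hΔ : 0 < Δ) (hM : 0 < M)
    (hHψ : ‖H ψ‖ ≤ M)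
    (hmean : Δ ≤ (⟪ψ, H ψ⟫).re)
    (Pr : E →L[ℂ] E) (hPrsa : IsSelfAdjoint Pr) (hPridem : Pr ∘L Pr = Pr)
    (hPrcomm : Pr ∘L H = H ∘L Pr)
    (hrange : ∀ x : E, Pr x = x → x ≠ 0 → Δ / 2 * ‖x‖ ^ 2 < (⟪x, H x⟫).re)
    (hker : ∀ x : E, Pr x = 0 → (⟪x, H x⟫).re ≤ Δ / 2 * ‖x‖ ^ 2) :
    ((⟪ψ, H ψ⟫).re - Δ / 2) / M ≤ ‖Pr ψ‖ ∧ Δ / (2 * M) ≤ ((⟪ψ, H ψ⟫).re - Δ / 2) / M := by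
  have hPsym : ∀ x y : E, ⟪Pr x, y⟫ = ⟪x, Pr y⟫ := fun x y =>
    hPrsa.isSymmetric x y
  set p := Pr ψ with hp
  set q := ψ - Pr ψ with hq
  have hPrq : Pr q = 0 := by
    have := congrArg (fun T : E →L[ℂ] E => T ψ) hPridem
    simp only [ContinuousLinearMap.comp_apply] at this
    simp [hq, map_sub, this]
  -- orthogonality of p and q
  have hpq : ⟪p, q⟫ = 0 := by
    calc ⟪p, q⟫ = ⟪ψ, Pr q⟫ := hPsym ψ q
    _ = 0 := by rw [hPrq]; simp
  -- norm decomposition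
  have hq_norm : ‖q‖ ^ 2 ≤ 1 := by
    have hsum : ‖ψ‖ ^ 2 = ‖p‖ ^ 2 + ‖q‖ ^ 2 := by
      have : ψ = p + q := by simp [hp, hq]
      rw [this, @norm_add_sq ℂ, hpq]
      simp
    nlinarith [sq_nonneg ‖p‖, hψ]
  -- cross term ⟨p, H q⟩ = 0
  have hcomm : ∀ x, Pr (H x) = H (Pr x) := fun x => by
    have := congrArg (fun T : E →L[ℂ] E => T x) hPrcomm
    simpa using this
  have hpHq : ⟪p, H q⟫ = 0 := by
    calc ⟪p, H q⟫ = ⟪ψ, Pr (H q)⟫ := hPsym ψ (H q)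
    _ = ⟪ψ, H (Pr q)⟫ := by rw [hcomm]
    _ = 0 := by rw [hPrq]; simp
  have hqHp : ⟪q, H p⟫ = 0 := by
    calc ⟪q, H p⟫ = ⟪q, Pr (H ψ)⟫ := by rw [hcomm]
    _ = ⟪Pr q, H ψ⟫ := (hPsym q (H ψ)).symm
    _ = 0 := by rw [hPrq]; simp
  -- ⟨p, H p⟩ = ⟨p, H ψ⟩
  have hpHp : ⟪p, H p⟫ = ⟪p, H ψ⟫ := by
    have : H ψ = H p + H q := by rw [← map_add]; congr 1; simp [hp, hq]
    rw [this, inner_add_right, hpHq, add_zero]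
  -- decompose mean energy
  have hdecomp : ⟪ψ, H ψ⟫ = ⟪p, H ψ⟫ + ⟪q, H q⟫ := by
    have hψpq : ψ = p + q := by simp [hp, hq]
    calc ⟪ψ, H ψ⟫ = ⟪p + q, H (p + q)⟫ := by rw [← hψpq]
    _ = ⟪p, H p⟫ + ⟪p, H q⟫ + (⟪q, H p⟫ + ⟪q, H q⟫) := by
        simp only [map_add, inner_add_left, inner_add_right]; ring
    _ = ⟪p, H ψ⟫ + ⟪q, H q⟫ := by rw [hpHp, hpHq, hqHp]; ring
  have hqq : (⟪q, H q⟫).re ≤ Δ / 2 := by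
    have := hker q hPrq
    nlinarith [hΔ]
  have hpHψ : (⟪p, H ψ⟫).re ≤ ‖p‖ * M := by
    have h1 : (⟪p, H ψ⟫).re ≤ ‖(⟪p, H ψ⟫ : ℂ)‖ := Complex.re_le_norm _
    have h2 : ‖(⟪p, H ψ⟫ : ℂ)‖ ≤ ‖p‖ * ‖H ψ‖ := norm_inner_le_norm p (H ψ)
    nlinarith [norm_nonneg p]
  have hmain : (⟪ψ, H ψ⟫).re - Δ / 2 ≤ M * ‖p‖ := by
    have : (⟪ψ, H ψ⟫).re = (⟪p, H ψ⟫).re + (⟪q, H q⟫).re := by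
      rw [hdecomp, Complex.add_re]
    nlinarith
  constructor
  · rw [div_le_iff₀ hM]
    linarith
  · rw [div_le_div_iff₀ (by positivity) hM]
    nlinarith
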